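/- There exists a sequential plurality voting profile with 3 alternatives and 6 voters plus a deterministic tie-breaking order in which a Condorcet loser is elected in the subgame-perfect equilibrium. Concretely: preferences Voter 1: A≻C≻B, Voter 2: C≻B≻A, Voter 3: B≻C≻A, Voter 4: A≻B≻C, Voter 5: A≻B≻C, Voter 6: B≻A≻C; tie-break order C≻B≻A. Then C is a Condorcet loser yet C is elected. -/

import Mathlib

open Classical
open Fin.NatCast

/-- `maxWrt worse s` picks the element of `s` that every other element of `s` is `worse` than. -/
noncomputable def maxWrt {O : Type} [Nonempty O] (worse : O → O → Prop) (s : Finset O) : O :=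
  if h : ∃ o ∈ s, ∀ o' ∈ s, o' ≠ o → worse o' o then h.choose else Classical.arbitrary O

/-- Backward-induction (subgame perfect) outcome of a sequential game with `n` remaining movers,
`worse k` the strict "is worse than" relation of the `k`-th mover on outcomes. -/
noncomputable def speOut {B O : Type} [Fintype B] [Nonempty O]
    (worse : ℕ → O → O → Prop) (outcome : List B → O) : ℕ → List B → O
  | 0, h => outcome h
  | n+1, h => maxWrt (worse h.length)
      (Finset.univ.image (fun b => speOut worse outcome n (h ++ [b])))

/-- number of ballots approving `x`. -/
def votes {m : ℕ} (h : List (Finset (Fin m))) (x : Fin m) : ℕ :=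
  h.countP (fun b => decide (x ∈ b))

/-- set of alternatives with the maximal number of votes. -/
def winSet {m : ℕ} (h : List (Finset (Fin m))) : Finset (Fin m) :=
  Finset.univ.filter (fun x => ∀ y, votes h y ≤ votes h x)

/-- deterministic tie-breaking: the member of the winning set with least tie-break rank. -/
noncomputable def detWinner {m : ℕ} [Nonempty (Fin m)] (tb : Fin m → ℕ)
    (h : List (Finset (Fin m))) : Fin m :=
  maxWrt (fun y x => tb x < tb y) (winSet h)

def topRank {m : ℕ} (r : Fin m → ℕ) (S : Finset (Fin m)) : WithTop ℕ := (S.image r).min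

/-- remove the most preferred element. -/
def shed {m : ℕ} (r : Fin m → ℕ) (S : Finset (Fin m)) : Finset (Fin m) :=
  S.filter (fun a => (r a : WithTop ℕ) ≠ topRank r S)

/-- the lifted strict preference on subsets: better top, or equal top and smaller,
or equal top and equal size and recursively better after removing the tops. -/
def liftBetter {m : ℕ} (r : Fin m → ℕ) : ℕ → Finset (Fin m) → Finset (Fin m) → Prop
  | 0, _, _ => False
  | fuel+1, S, S' =>
    topRank r S < topRank r S' ∨
    (topRank r S = topRank r S' ∧ S.card < S'.card) ∨
    (topRank r S = topRank r S' ∧ S.card = S'.card ∧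
      liftBetter r fuel (shed r S) (shed r S'))

/-- `x` beats `y` in pairwise majority comparison. -/
def beats {n m : ℕ} (prof : Fin n → Fin m → ℕ) (x y : Fin m) : Prop :=
  (Finset.univ.filter (fun i => prof i x < prof i y)).card >
  (Finset.univ.filter (fun i => prof i y < prof i x)).card


section Aux

lemma maxWrt_eq {O : Type} [Nonempty O] {r : O → ℕ} {s : Finset O} {a : O}
    (ha : a ∈ s) (hmin : ∀ o' ∈ s, o' ≠ a → r a < r o') :
    maxWrt (fun y x => r x < r y) s = a := by
  have hex : ∃ o ∈ s, ∀ o' ∈ s, o' ≠ o → (fun y x => r x < r y) o' o := ⟨a, ha, hmin⟩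
  rw [maxWrt, dif_pos hex]
  obtain ⟨hmem, hdom⟩ := hex.choose_spec
  by_contra hne
  have h1 : r hex.choose < r a := hdom a ha (fun h => hne h.symm)
  have h2 : r a < r hex.choose := hmin hex.choose hmem hne
  omega

def plist (s : Finset (Fin 3)) : List (Fin 3) :=
  [0, 1, 2].filter (fun x : Fin 3 => decide (x ∈ s))

lemma mem_plist {s : Finset (Fin 3)} {x : Fin 3} : x ∈ plist s ↔ x ∈ s := by
  have hx : x ∈ ([0, 1, 2] : List (Fin 3)) := by fin_cases x <;> simp
  simp [plist, List.mem_filter, hx]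

def pick (r : Fin 3 → ℕ) (s : Finset (Fin 3)) : Fin 3 :=
  ((plist s).argmin r).getD 0

lemma pick_spec {r : Fin 3 → ℕ} {s : Finset (Fin 3)} (hs : s.Nonempty) :
    pick r s ∈ s ∧ ∀ o' ∈ s, r (pick r s) ≤ r o' := by
  have hl : plist s ≠ [] := by
    intro h
    obtain ⟨x, hx⟩ := hs
    have := mem_plist.2 hx
    rw [h] at this; exact List.not_mem_nil this
  obtain ⟨a, ha⟩ : ∃ a, (plist s).argmin r = some a := by
    cases h : (plist s).argmin r with
    | none => exact absurd (List.argmin_eq_none.1 h) hl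
    | some a => exact ⟨a, rfl⟩
  have hp : pick r s = a := by rw [pick, ha]; rfl
  have haa : a ∈ (plist s).argmin r := by rw [ha]; rfl
  rw [hp]
  refine ⟨mem_plist.1 (List.argmin_mem haa), fun o' ho' => ?_⟩
  exact List.le_of_mem_argmin (mem_plist.2 ho') haa

lemma maxWrt_pick {r : Fin 3 → ℕ} (hr : Function.Injective r) {s : Finset (Fin 3)}
    (hs : s.Nonempty) : maxWrt (fun y x => r x < r y) s = pick r s := by
  obtain ⟨hmem, hmin⟩ := pick_spec (r := r) hs
  exact maxWrt_eq hmem (fun o' ho' hne =>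
    lt_of_le_of_ne (hmin o' ho') (fun h => hne (hr h.symm)))

lemma image_eq_of_inst {α β : Type} (f : α → β) (s : Finset α)
    (h1 h2 : DecidableEq β) :
    @Finset.image _ _ h1 f s = @Finset.image _ _ h2 f s := by
  exact Subsingleton.elim h1 h2 ▸ rfl

lemma filter_eq_of_inst {α : Type*} (s : Finset α) (p : α → Prop)
    (h1 h2 : DecidablePred p) :
    @Finset.filter _ p h1 s = @Finset.filter _ p h2 s := by
  exact Subsingleton.elim h1 h2 ▸ rfl

lemma winSet_nonempty (h : List (Finset (Fin 3))) : (winSet h).Nonempty := by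
  obtain ⟨x, -, hx⟩ := Finset.exists_max_image Finset.univ (votes h) Finset.univ_nonempty
  exact ⟨x, Finset.mem_filter.2 ⟨Finset.mem_univ x, fun y => hx y (Finset.mem_univ y)⟩⟩

def winSetC (h : List (Finset (Fin 3))) : Finset (Fin 3) :=
  @Finset.filter _ (fun x => ∀ y, votes h y ≤ votes h x)
    (fun _ => Nat.decidableForallFin _) Finset.univ

lemma winSetC_eq (h : List (Finset (Fin 3))) : winSet h = winSetC h :=
  filter_eq_of_inst _ _ _ _

def speC (r : ℕ → Fin 3 → ℕ) (tb : Fin 3 → ℕ) : ℕ → List (Option (Fin 3)) → Fin 3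
  | 0, h => pick tb (winSetC (h.map Option.toFinset))
  | n+1, h => pick (r h.length)
      (Finset.univ.image (fun b : Option (Fin 3) => speC r tb n (h ++ [b])))

lemma speOut_eq_speC (r : ℕ → Fin 3 → ℕ) (tb : Fin 3 → ℕ)
    (hr : ∀ i, Function.Injective (r i)) (htb : Function.Injective tb) :
    ∀ n h, speOut (fun i (x y : Fin 3) => r i y < r i x)
      (fun h : List (Option (Fin 3)) => detWinner tb (h.map Option.toFinset)) n h
      = speC r tb n h := by
  intro n
  induction n with
  | zero =>
    intro h
    rw [speOut, speC, detWinner, maxWrt_pick htb (winSet_nonempty _), winSetC_eq]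
  | succ n ih =>
    intro h
    rw [speOut, speC]
    simp only [ih]
    have hne : (Finset.univ.image
        (fun b : Option (Fin 3) => speC r tb n (h ++ [b]))).Nonempty :=
      Finset.Nonempty.image ⟨none, Finset.mem_univ none⟩ _
    have e := image_eq_of_inst (fun b : Option (Fin 3) => speC r tb n (h ++ [b]))
      Finset.univ (fun a b => propDecidable (a = b)) (instDecidableEqFin 3)
    rw [e]
    exact maxWrt_pick (hr h.length) hne

end Aux

set_option maxHeartbeats 16000000

/-- Condorcet loser paradox in sequential plurality voting with deterministic
tie-breaking: 3 alternatives A=0, B=1, C=2, 6 voters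
(A≻C≻B, C≻B≻A, B≻C≻A, A≻B≻C, A≻B≻C, B≻A≻C), tie-break order C≻B≻A.
C is a Condorcet loser but C is elected in the SPE. -/
theorem condorcet_loser_paradox_plurality_deterministic :
    let prof : Fin 6 → Fin 3 → ℕ :=
      ![![0,2,1], ![2,1,0], ![2,0,1], ![0,1,2], ![0,1,2], ![1,0,2]]
    let tb : Fin 3 → ℕ := ![2,1,0]
    (∀ y : Fin 3, y ≠ 2 → beats prof y 2) ∧
    speOut (fun i (x y : Fin 3) => prof i y < prof i x)
      (fun h : List (Option (Fin 3)) => detWinner tb (h.map Option.toFinset)) 6 [] = 2 := by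
  intro prof tb
  constructor
  · intro y hy
    unfold beats
    rw [filter_eq_of_inst _ _ _ (fun i => Nat.decLt _ _),
        filter_eq_of_inst _ _ _ (fun i => Nat.decLt _ _)]
    revert hy
    revert y
    decide
  · have hr : ∀ i : ℕ, Function.Injective (fun x : Fin 3 => prof i x) := by
      intro i
      have h6 : ∀ j : Fin 6, Function.Injective (fun x : Fin 3 => prof j x) := by decide
      exact h6 i
    have htb : Function.Injective tb := by decide
    rw [speOut_eq_speC (fun i x => prof i x) tb hr htb 6 []]
    decide
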